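/- A strongly summable ultrafilter p on ℕ with disjoint α-support is α-special: there exists a sequence x with sufficient growth, disjoint α-support and FS(x) ∈ p such that for every infinite L ⊆ ℕ there is a condensation y of x with FS(y) ∈ p and L \ αsupp(y) infinite, where αsupp(y) := ⋃_n αsupp(y_n). -/

import Mathlib

/-- `FS(x)`: the set of all finite sums `∑_{i∈s} x i` over nonempty finite `s ⊆ ℕ`. -/
def FS (x : ℕ → ℕ) : Set ℕ := {n | ∃ s : Finset ℕ, s.Nonempty ∧ ∑ i ∈ s, x i = n}

/-- `x` has sufficient growth: `x n > 4·∑_{i<n} x i` for every `n`. -/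
def SufficientGrowth (x : ℕ → ℕ) : Prop :=
  ∀ n, 4 * ∑ i ∈ Finset.range n, x i < x n

/-- `p` is strongly summable. -/
def StronglySummable (p : Ultrafilter ℕ) : Prop :=
  ∀ A ∈ p, ∃ x : ℕ → ℕ, (∀ n, 0 < x n) ∧ FS x ⊆ A ∧ FS x ∈ p

/-- The `i`-th digit of `n` in the representation induced by the divisible sequence `a`. -/
def alphaDigit (a : ℕ → ℕ) (n i : ℕ) : ℕ := (n / a i) % (a (i + 1) / a i)

/-- The `α`-support of `n`: the set of indices with nonzero digit. -/
def asupp (a : ℕ → ℕ) (n : ℕ) : Set ℕ := {i | alphaDigit a n i ≠ 0}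

/-- A sequence `x` has disjoint `α`-support. -/
def DisjointAlphaSupport (a : ℕ → ℕ) (x : ℕ → ℕ) : Prop :=
  ∀ i j, i ≠ j → Disjoint (asupp a (x i)) (asupp a (x j))

section Digits

variable {a : ℕ → ℕ}

lemma a_pos (ha0 : a 0 = 1) (hamono : ∀ n, a n < a (n + 1)) : ∀ i, 0 < a i := by
  intro i
  induction i with
  | zero => omega
  | succ k ih => have := hamono k; omega

lemma a_ratio_mul (hadvd : ∀ n, a n ∣ a (n + 1)) (ha0 : a 0 = 1)
    (hamono : ∀ n, a n < a (n + 1)) (i : ℕ) : a i * (a (i+1) / a i) = a i * (a (i+1) / a i) := rfl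

lemma a_div_mul (ha0 : a 0 = 1) (hadvd : ∀ n, a n ∣ a (n + 1)) (hamono : ∀ n, a n < a (n + 1))
    (i : ℕ) : a i * (a (i+1) / a i) = a (i+1) :=
  Nat.mul_div_cancel' (hadvd i)

lemma a_ratio_ge_two (ha0 : a 0 = 1) (hadvd : ∀ n, a n ∣ a (n + 1))
    (hamono : ∀ n, a n < a (n + 1)) (i : ℕ) : 2 ≤ a (i+1) / a i := by
  have h1 := a_div_mul ha0 hadvd hamono i
  have h2 := hamono i
  have h3 := a_pos ha0 hamono i
  rcases Nat.lt_or_ge (a (i+1) / a i) 2 with h | h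
  · interval_cases h4 : (a (i+1) / a i) <;> omega
  · exact h

lemma alphaDigit_lt (ha0 : a 0 = 1) (hadvd : ∀ n, a n ∣ a (n + 1))
    (hamono : ∀ n, a n < a (n + 1)) (n i : ℕ) : alphaDigit a n i < a (i+1) / a i := by
  have := a_ratio_ge_two ha0 hadvd hamono i
  exact Nat.mod_lt _ (by omega)

lemma mod_succ_eq (ha0 : a 0 = 1) (hadvd : ∀ n, a n ∣ a (n + 1))
    (hamono : ∀ n, a n < a (n + 1)) (n i : ℕ) :
    n % a (i+1) = alphaDigit a n i * a i + n % a i := by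
  have hmul := a_div_mul ha0 hadvd hamono i
  have hpos := a_pos ha0 hamono i
  -- n % a(i+1) = (n % a(i+1) / a i) * a i + (n % a(i+1)) % a i
  have h1 : n % a (i+1) % a i = n % a i := Nat.mod_mod_of_dvd n (hadvd i)
  have h2 : n % a (i+1) / a i = n / a i % (a (i+1) / a i) := by
    conv_lhs => rw [← hmul]
    exact Nat.mod_mul_right_div_self n (a i) (a (i+1) / a i)
  have h3 : n % a (i+1) = (n % a (i+1) / a i) * a i + n % a (i+1) % a i := by
    have h := Nat.div_add_mod (n % a (i+1)) (a i)
    have hc : a i * (n % a (i+1) / a i) = (n % a (i+1) / a i) * a i := Nat.mul_comm _ _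
    omega
  rw [h3, h1, h2]; rfl

end Digits

section Digits2

variable {a : ℕ → ℕ} (ha0 : a 0 = 1) (hadvd : ∀ n, a n ∣ a (n + 1))
  (hamono : ∀ n, a n < a (n + 1))

include ha0 hadvd hamono

lemma no_carry {u v : ℕ} (h : Disjoint (asupp a u) (asupp a v)) :
    ∀ k, u % a k + v % a k < a k := by
  intro k
  induction k with
  | zero => simp [ha0, Nat.mod_one]
  | succ k ih =>
    have hu := mod_succ_eq ha0 hadvd hamono u k
    have hv := mod_succ_eq ha0 hadvd hamono v k
    have hmul := a_div_mul ha0 hadvd hamono k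
    have hlt_u := alphaDigit_lt ha0 hadvd hamono u k
    have hlt_v := alphaDigit_lt ha0 hadvd hamono v k
    have hdis : alphaDigit a u k = 0 ∨ alphaDigit a v k = 0 := by
      by_contra hc
      push_neg at hc
      have : k ∈ asupp a u ∩ asupp a v := ⟨hc.1, hc.2⟩
      rw [Set.disjoint_iff_inter_eq_empty.mp h] at this
      exact this
    have hpos := a_pos ha0 hamono k
    -- bound: (alpha u + alpha v) ≤ (m-1) where m = a(k+1)/a k
    have hsum : alphaDigit a u k + alphaDigit a v k ≤ a (k+1) / a k - 1 := by
      rcases hdis with h0 | h0 <;> omega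
    have hb : (alphaDigit a u k + alphaDigit a v k) * a k ≤ (a (k+1) / a k - 1) * a k :=
      Nat.mul_le_mul_right _ hsum
    have hm2 := a_ratio_ge_two ha0 hadvd hamono k
    have hexp : (a (k+1) / a k - 1) * a k + a k = a (k+1) := by
      have : (a (k+1) / a k - 1 + 1) = a (k+1) / a k := by omega
      calc (a (k+1) / a k - 1) * a k + a k = (a (k+1) / a k - 1 + 1) * a k := by ring
        _ = (a (k+1) / a k) * a k := by rw [this]
        _ = a k * (a (k+1) / a k) := Nat.mul_comm _ _
        _ = a (k+1) := hmul
    have hd : (alphaDigit a u k + alphaDigit a v k) * a k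
        = alphaDigit a u k * a k + alphaDigit a v k * a k := by ring
    omega

lemma mod_add_of_disjoint {u v : ℕ} (h : Disjoint (asupp a u) (asupp a v)) (k : ℕ) :
    (u + v) % a k = u % a k + v % a k := by
  have hlt := no_carry ha0 hadvd hamono h k
  have hpos := a_pos ha0 hamono k
  conv_lhs => rw [← Nat.div_add_mod u (a k), ← Nat.div_add_mod v (a k)]
  have : a k * (u / a k) + u % a k + (a k * (v / a k) + v % a k)
      = a k * (u / a k + v / a k) + (u % a k + v % a k) := by ring
  rw [this, Nat.mul_add_mod, Nat.mod_eq_of_lt hlt]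

lemma alphaDigit_add {u v : ℕ} (h : Disjoint (asupp a u) (asupp a v)) (i : ℕ) :
    alphaDigit a (u+v) i = alphaDigit a u i + alphaDigit a v i := by
  have h1 := mod_succ_eq ha0 hadvd hamono (u+v) i
  have h2 := mod_succ_eq ha0 hadvd hamono u i
  have h3 := mod_succ_eq ha0 hadvd hamono v i
  have h4 := mod_add_of_disjoint ha0 hadvd hamono h (i+1)
  have h5 := mod_add_of_disjoint ha0 hadvd hamono h i
  have hpos := a_pos ha0 hamono i
  have key : alphaDigit a (u+v) i * a i = (alphaDigit a u i + alphaDigit a v i) * a i := by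
    have : (alphaDigit a u i + alphaDigit a v i) * a i
        = alphaDigit a u i * a i + alphaDigit a v i * a i := by ring
    omega
  exact Nat.eq_of_mul_eq_mul_right hpos key

lemma asupp_add {u v : ℕ} (h : Disjoint (asupp a u) (asupp a v)) :
    asupp a (u+v) = asupp a u ∪ asupp a v := by
  ext i
  simp only [asupp, Set.mem_setOf_eq, Set.mem_union]
  rw [alphaDigit_add ha0 hadvd hamono h i]
  omega

lemma a_ge (i : ℕ) : i + 1 ≤ a i := by
  induction i with
  | zero => omega
  | succ k ih => have := hamono k; omega

lemma asupp_subset (n : ℕ) : asupp a n ⊆ Set.Iio n := by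
  intro i hi
  simp only [asupp, Set.mem_setOf_eq, alphaDigit] at hi
  simp only [Set.mem_Iio]
  by_contra hc
  push_neg at hc
  have h1 : a i ≥ i + 1 := a_ge ha0 hadvd hamono i
  have h2 : n / a i = 0 := Nat.div_eq_of_lt (by omega)
  rw [h2] at hi
  simp at hi

lemma asupp_finite (n : ℕ) : (asupp a n).Finite :=
  Set.Finite.subset (Set.finite_Iio n) (asupp_subset ha0 hadvd hamono n)

end Digits2

section Comps

/-- number of interval components of a finite set = number of right endpoints -/
def comps (S : Finset ℕ) : ℕ := (S.filter fun d => d + 1 ∉ S).card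

/-- directed adjacency count -/
def gR (S T : Finset ℕ) : ℕ := (S.filter fun d => d + 1 ∈ T).card

/-- total adjacency (glue) count -/
def glue (S T : Finset ℕ) : ℕ := gR S T + gR T S

lemma comps_union {S T : Finset ℕ} (h : Disjoint S T) :
    comps (S ∪ T) + glue S T = comps S + comps T := by
  classical
  have hS : comps S = gR S T + (S.filter fun d => d + 1 ∉ S ∪ T).card := by
    unfold comps gR
    rw [← Finset.card_union_of_disjoint]
    · congr 1
      ext d
      simp only [Finset.mem_filter, Finset.mem_union]
      constructor
      · rintro ⟨hd, hnot⟩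
        by_cases hT : d + 1 ∈ T
        · exact Or.inl ⟨hd, hT⟩
        · exact Or.inr ⟨hd, by tauto⟩
      · rintro (⟨hd, hT⟩ | ⟨hd, hn⟩)
        · refine ⟨hd, fun hc => ?_⟩
          exact (Finset.disjoint_left.mp h hc) hT
        · exact ⟨hd, by tauto⟩
    · rw [Finset.disjoint_left]
      intro d hd1 hd2
      simp only [Finset.mem_filter, Finset.mem_union] at hd1 hd2
      tauto
  have hT : comps T = gR T S + (T.filter fun d => d + 1 ∉ S ∪ T).card := by
    unfold comps gR
    rw [← Finset.card_union_of_disjoint]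
    · congr 1
      ext d
      simp only [Finset.mem_filter, Finset.mem_union]
      constructor
      · rintro ⟨hd, hnot⟩
        by_cases hS' : d + 1 ∈ S
        · exact Or.inl ⟨hd, hS'⟩
        · exact Or.inr ⟨hd, by tauto⟩
      · rintro (⟨hd, hS'⟩ | ⟨hd, hn⟩)
        · refine ⟨hd, fun hc => ?_⟩
          exact (Finset.disjoint_left.mp h hS') hc
        · exact ⟨hd, by tauto⟩
    · rw [Finset.disjoint_left]
      intro d hd1 hd2
      simp only [Finset.mem_filter, Finset.mem_union] at hd1 hd2
      tauto
  have hU : comps (S ∪ T) = (S.filter fun d => d + 1 ∉ S ∪ T).card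
      + (T.filter fun d => d + 1 ∉ S ∪ T).card := by
    unfold comps
    rw [← Finset.card_union_of_disjoint]
    · congr 1
      rw [Finset.filter_union]
    · exact Finset.disjoint_filter_filter h
  unfold glue
  omega

end Comps

section Comps2

/-- number of left endpoints -/
def compsL (S : Finset ℕ) : ℕ := (S.filter fun d => d = 0 ∨ d - 1 ∉ S).card

lemma compsL_eq (S : Finset ℕ) : compsL S = comps S := by
  classical
  have h1 : comps S + (S.filter fun d => d + 1 ∈ S).card = S.card := by
    unfold comps
    have := Finset.card_filter_add_card_filter_not
      (s := S) (p := fun d => d + 1 ∉ S)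
    simpa using this
  have h2 : compsL S + (S.filter fun d => d ≠ 0 ∧ d - 1 ∈ S).card = S.card := by
    unfold compsL
    have := Finset.card_filter_add_card_filter_not
      (s := S) (p := fun d => d = 0 ∨ d - 1 ∉ S)
    simp only [not_or, not_not] at this
    rw [show (S.filter fun d => d ≠ 0 ∧ d - 1 ∈ S) = (S.filter fun d => ¬d = 0 ∧ d - 1 ∈ S) by
      ext d; simp only [Finset.mem_filter, ne_eq]]
    exact this
  have h3 : (S.filter fun d => d + 1 ∈ S).card = (S.filter fun d => d ≠ 0 ∧ d - 1 ∈ S).card := by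
    apply Finset.card_bij (fun d _ => d + 1)
    · intro d hd
      simp only [Finset.mem_filter] at hd ⊢
      exact ⟨hd.2, by omega, by simpa using hd.1⟩
    · intro d hd d' hd' he
      omega
    · intro e he
      simp only [Finset.mem_filter] at he
      refine ⟨e - 1, ?_, by omega⟩
      simp only [Finset.mem_filter]
      refine ⟨he.2.2, ?_⟩
      have : e - 1 + 1 = e := by omega
      rw [this]; exact he.1
  omega

end Comps2

section Tele

open Classical in
lemma tele_count (V : Set ℕ) (M : ℕ) :
    ((Finset.range M).filter (fun d => d ∉ V ∧ (d+1) ∈ V)).card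
      + (if (0:ℕ) ∈ V then 1 else 0)
    = ((Finset.range M).filter (fun d => d ∈ V ∧ (d+1) ∉ V)).card
      + (if M ∈ V then 1 else 0) := by
  classical
  induction M with
  | zero => simp
  | succ M ih =>
    have hM : M ∉ Finset.range M := by simp
    rw [Finset.range_add_one]
    by_cases h0 : M ∈ V <;> by_cases h1 : (M+1) ∈ V
    · have e1 : (insert M (Finset.range M)).filter (fun d => d ∉ V ∧ (d+1) ∈ V)
          = (Finset.range M).filter (fun d => d ∉ V ∧ (d+1) ∈ V) := by
        rw [Finset.filter_insert, if_neg (fun hc => hc.1 h0)]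
      have e2 : (insert M (Finset.range M)).filter (fun d => d ∈ V ∧ (d+1) ∉ V)
          = (Finset.range M).filter (fun d => d ∈ V ∧ (d+1) ∉ V) := by
        rw [Finset.filter_insert, if_neg (fun hc => hc.2 h1)]
      rw [e1, e2, if_pos h1]
      rw [if_pos h0] at ih
      omega
    · have e1 : (insert M (Finset.range M)).filter (fun d => d ∉ V ∧ (d+1) ∈ V)
          = (Finset.range M).filter (fun d => d ∉ V ∧ (d+1) ∈ V) := by
        rw [Finset.filter_insert, if_neg (fun hc => hc.1 h0)]
      have e2 : ((insert M (Finset.range M)).filter (fun d => d ∈ V ∧ (d+1) ∉ V)).card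
          = ((Finset.range M).filter (fun d => d ∈ V ∧ (d+1) ∉ V)).card + 1 := by
        rw [Finset.filter_insert, if_pos ⟨h0, h1⟩,
          Finset.card_insert_of_notMem (fun hc => hM (Finset.mem_of_mem_filter _ hc))]
      rw [e1, e2, if_neg h1]
      rw [if_pos h0] at ih
      omega
    · have e1 : ((insert M (Finset.range M)).filter (fun d => d ∉ V ∧ (d+1) ∈ V)).card
          = ((Finset.range M).filter (fun d => d ∉ V ∧ (d+1) ∈ V)).card + 1 := by
        rw [Finset.filter_insert, if_pos ⟨h0, h1⟩,
          Finset.card_insert_of_notMem (fun hc => hM (Finset.mem_of_mem_filter _ hc))]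
      have e2 : (insert M (Finset.range M)).filter (fun d => d ∈ V ∧ (d+1) ∉ V)
          = (Finset.range M).filter (fun d => d ∈ V ∧ (d+1) ∉ V) := by
        rw [Finset.filter_insert, if_neg (fun hc => h0 hc.1)]
      rw [e1, e2, if_pos h1]
      rw [if_neg h0] at ih
      omega
    · have e1 : (insert M (Finset.range M)).filter (fun d => d ∉ V ∧ (d+1) ∈ V)
          = (Finset.range M).filter (fun d => d ∉ V ∧ (d+1) ∈ V) := by
        rw [Finset.filter_insert, if_neg (fun hc => h1 hc.2)]
      have e2 : (insert M (Finset.range M)).filter (fun d => d ∈ V ∧ (d+1) ∉ V)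
          = (Finset.range M).filter (fun d => d ∈ V ∧ (d+1) ∉ V) := by
        rw [Finset.filter_insert, if_neg (fun hc => h0 hc.1)]
      rw [e1, e2, if_neg h1]
      rw [if_neg h0] at ih
      omega

end Tele

section Parity

/-- The key parity lemma: an infinite pairwise disjoint family of finite subsets of `ℕ`
with all component counts even and all pairwise glue counts even cannot cover a
cofinite set. -/
lemma parity_contra (T : ℕ → Finset ℕ)
    (hdisj : ∀ i j, i ≠ j → Disjoint (T i) (T j))
    (heven : ∀ n, Even (comps (T n)))
    (hglue : ∀ i j, i ≠ j → Even (glue (T i) (T j)))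
    (hcof : {d : ℕ | ∀ n, d ∉ T n}.Finite) : False := by
  classical
  set V : Set ℕ := {d : ℕ | ∃ n, d ∈ T n} with hV
  have hVc : Vᶜ = {d : ℕ | ∀ n, d ∉ T n} := by
    ext d; simp [hV]
  have hVcfin : Vᶜ.Finite := by rw [hVc]; exact hcof
  -- block index function
  set β : ℕ → ℕ := fun e => if h : ∃ m, e ∈ T m then h.choose else 0 with hβdef
  have hβmem : ∀ e, e ∈ V → e ∈ T (β e) := by
    intro e he
    rcases he with ⟨m, hm⟩
    have hex : ∃ m, e ∈ T m := ⟨m, hm⟩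
    simp only [hβdef, dif_pos hex]
    exact hex.choose_spec
  have hβuniq : ∀ e m, e ∈ T m → β e = m := by
    intro e m hm
    have heV : e ∈ V := ⟨m, hm⟩
    by_contra hne
    exact (Finset.disjoint_left.mp (hdisj _ _ hne) (hβmem e heV)) hm
  -- R and Λ sets
  have hRfin : {d : ℕ | d ∈ V ∧ (d+1) ∉ V}.Finite := by
    have : {d : ℕ | d ∈ V ∧ (d+1) ∉ V} ⊆ (fun d => d + 1) ⁻¹' Vᶜ := by
      intro d hd; exact hd.2
    exact Set.Finite.subset (Set.Finite.preimage (Set.injOn_of_injective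
      (fun x y h => by omega)) hVcfin) this
  have hΛfin : {d : ℕ | d ∈ V ∧ (d = 0 ∨ (d ≠ 0 ∧ (d-1) ∉ V))}.Finite := by
    have : {d : ℕ | d ∈ V ∧ (d = 0 ∨ (d ≠ 0 ∧ (d-1) ∉ V))} ⊆
        {0} ∪ (fun d => d + 1) '' Vᶜ := by
      rintro d ⟨hdV, h0 | ⟨hne, hnm⟩⟩
      · simp [h0]
      · right; exact ⟨d - 1, hnm, by show d - 1 + 1 = d; omega⟩
    exact Set.Finite.subset (Set.Finite.union (Set.finite_singleton 0)
      (Set.Finite.image _ hVcfin)) this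
  set Rfin : Finset ℕ := hRfin.toFinset with hRdef
  set Λfin : Finset ℕ := hΛfin.toFinset with hΛdef
  -- per-block cardinalities
  set cardR : ℕ → ℕ := fun n => ((T n).filter (fun d => (d+1) ∉ V)).card with hcardR
  set cardΛ : ℕ → ℕ := fun n =>
    ((T n).filter (fun d => d = 0 ∨ (d ≠ 0 ∧ (d-1) ∉ V))).card with hcardΛ
  set crossR : ℕ → ℕ := fun n =>
    ((T n).filter (fun d => (d+1) ∈ V ∧ (d+1) ∉ T n)).card with hcrossR
  set crossL : ℕ → ℕ := fun n =>
    ((T n).filter (fun d => d ≠ 0 ∧ (d-1) ∈ V ∧ (d-1) ∉ T n)).card with hcrossL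
  -- (1) comps decomposition
  have hdecR : ∀ n, comps (T n) = cardR n + crossR n := by
    intro n
    unfold comps
    rw [hcardR, hcrossR]
    rw [← Finset.card_union_of_disjoint]
    · congr 1
      ext d
      simp only [Finset.mem_filter, Finset.mem_union]
      constructor
      · rintro ⟨hd, hnot⟩
        by_cases hv : (d+1) ∈ V
        · exact Or.inr ⟨hd, hv, hnot⟩
        · exact Or.inl ⟨hd, hv⟩
      · rintro (⟨hd, hv⟩ | ⟨hd, hv, hnot⟩)
        · exact ⟨hd, fun hc => hv ⟨n, hc⟩⟩
        · exact ⟨hd, hnot⟩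
    · rw [Finset.disjoint_left]
      intro d hd1 hd2
      simp only [Finset.mem_filter] at hd1 hd2
      exact hd1.2 hd2.2.1
  have hdecL : ∀ n, compsL (T n) = cardΛ n + crossL n := by
    intro n
    unfold compsL
    rw [hcardΛ, hcrossL]
    rw [← Finset.card_union_of_disjoint]
    · congr 1
      ext d
      simp only [Finset.mem_filter, Finset.mem_union]
      constructor
      · rintro ⟨hd, hnot⟩
        rcases hnot with h0 | hnm
        · exact Or.inl ⟨hd, Or.inl h0⟩
        · by_cases h0' : d = 0
          · exact Or.inl ⟨hd, Or.inl h0'⟩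
          · by_cases hv : (d-1) ∈ V
            · exact Or.inr ⟨hd, h0', hv, hnm⟩
            · exact Or.inl ⟨hd, Or.inr ⟨h0', hv⟩⟩
      · rintro (⟨hd, h0 | ⟨hne, hv⟩⟩ | ⟨hd, hne, hv, hnot⟩)
        · exact ⟨hd, Or.inl h0⟩
        · exact ⟨hd, Or.inr (fun hc => hv ⟨n, hc⟩)⟩
        · exact ⟨hd, Or.inr hnot⟩
    · rw [Finset.disjoint_left]
      intro d hd1 hd2
      simp only [Finset.mem_filter] at hd1 hd2
      rcases hd1.2 with h0 | ⟨hne, hv⟩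
      · exact hd2.2.1 h0
      · exact hv hd2.2.2.1
  -- (3) cross parity
  have hcross : ∀ n, Even (crossR n + crossL n) := by
    intro n
    set SR : Finset ℕ := (T n).filter (fun d => (d+1) ∈ V ∧ (d+1) ∉ T n) with hSR
    set SL : Finset ℕ := (T n).filter (fun d => d ≠ 0 ∧ (d-1) ∈ V ∧ (d-1) ∉ T n) with hSL
    set Mn : Finset ℕ := SR.image (fun d => β (d+1)) ∪ SL.image (fun d => β (d-1)) with hMn
    have hMn_ne : ∀ m ∈ Mn, m ≠ n := by
      intro m hm
      simp only [hMn, Finset.mem_union, Finset.mem_image] at hm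
      rcases hm with ⟨d, hd, hde⟩ | ⟨d, hd, hde⟩
      · simp only [hSR, Finset.mem_filter] at hd
        intro hc
        apply hd.2.2
        rw [← hc, ← hde]
        exact hβmem _ hd.2.1
      · simp only [hSL, Finset.mem_filter] at hd
        intro hc
        apply hd.2.2.2
        rw [← hc, ← hde]
        exact hβmem _ hd.2.2.1
    have hfibR : ∀ m ∈ Mn, (SR.filter (fun d => β (d+1) = m)) =
        ((T n).filter (fun d => d + 1 ∈ T m)) := by
      intro m hm
      have hmn := hMn_ne m hm
      ext d
      simp only [hSR, Finset.mem_filter]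
      constructor
      · rintro ⟨⟨hd, hv, hnt⟩, hβ⟩
        exact ⟨hd, by rw [← hβ]; exact hβmem _ hv⟩
      · rintro ⟨hd, hdm⟩
        have hv : (d+1) ∈ V := ⟨m, hdm⟩
        refine ⟨⟨hd, hv, fun hc => ?_⟩, hβuniq _ _ hdm⟩
        exact (Finset.disjoint_left.mp (hdisj m n hmn) hdm) hc
    have hR : crossR n = ∑ m ∈ Mn, gR (T n) (T m) := by
      have h0 : crossR n = SR.card := rfl
      rw [h0, Finset.card_eq_sum_card_fiberwise
        (f := fun d => β (d+1)) (t := Mn) ?hmaps]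
      case hmaps =>
        intro d hd
        simp only [Finset.mem_coe, hMn, Finset.mem_union, Finset.mem_image]
        exact Or.inl ⟨d, hd, rfl⟩
      apply Finset.sum_congr rfl
      intro m hm
      rw [hfibR m hm]
      rfl
    have hfibL : ∀ m ∈ Mn, (SL.filter (fun d => β (d-1) = m)).card = gR (T m) (T n) := by
      intro m hm
      have hmn := hMn_ne m hm
      unfold gR
      apply Finset.card_bij (fun d _ => d - 1)
      · intro d hd
        simp only [hSL, Finset.mem_filter] at hd
        obtain ⟨⟨hdn, hne, hv, hnt⟩, hβe⟩ := hd
        simp only [Finset.mem_filter]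
        constructor
        · rw [← hβe]; exact hβmem _ hv
        · have : d - 1 + 1 = d := by omega
          rw [this]; exact hdn
      · intro d hd d' hd' he
        simp only [hSL, Finset.mem_filter] at hd hd'
        omega
      · intro e he
        simp only [Finset.mem_filter] at he
        refine ⟨e + 1, ?_, by show e + 1 - 1 = e; omega⟩
        simp only [hSL, Finset.mem_filter]
        have h1 : e + 1 - 1 = e := by omega
        rw [h1]
        refine ⟨⟨he.2, by omega, ⟨m, he.1⟩, fun hc => ?_⟩, hβuniq _ _ he.1⟩
        exact (Finset.disjoint_left.mp (hdisj m n hmn) he.1) hc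
    have hL : crossL n = ∑ m ∈ Mn, gR (T m) (T n) := by
      have h0 : crossL n = SL.card := rfl
      rw [h0, Finset.card_eq_sum_card_fiberwise
        (f := fun d => β (d-1)) (t := Mn) ?hmaps2]
      case hmaps2 =>
        intro d hd
        simp only [Finset.mem_coe, hMn, Finset.mem_union, Finset.mem_image]
        exact Or.inr ⟨d, hd, rfl⟩
      exact Finset.sum_congr rfl hfibL
    rw [hR, hL, ← Finset.sum_add_distrib]
    exact Finset.even_sum _ (fun m hm => hglue n m (fun h => (hMn_ne m hm) h.symm))
  -- (4) per-block parity of boundary counts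
  have hbdry : ∀ n, Even (cardR n + cardΛ n) := by
    intro n
    have h1 := hdecR n
    have h2 := hdecL n
    have h3 : compsL (T n) = comps (T n) := compsL_eq (T n)
    have h4 := heven n
    have h5 := hcross n
    rw [Nat.even_iff] at h4 h5 ⊢
    omega
  -- (5) global sums
  set J : Finset ℕ := (Rfin ∪ Λfin).image β with hJ
  have hdisjfil : ∀ x ∈ J, ∀ y ∈ J, x ≠ y →
      ∀ (P : ℕ → Prop) (Q : ℕ → Prop) (inst1 : DecidablePred P) (inst2 : DecidablePred Q),
      Disjoint ((T x).filter P) ((T y).filter Q) := by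
    intro x _ y _ hxy P Q _ _
    exact Finset.disjoint_filter_filter (hdisj x y hxy)
  have hsumR : ∑ n ∈ J, cardR n = Rfin.card := by
    have hbi : Rfin = J.biUnion (fun n => (T n).filter (fun d => (d+1) ∉ V)) := by
      ext d
      simp only [hRdef, Set.Finite.mem_toFinset, Set.mem_setOf_eq, Finset.mem_biUnion,
        Finset.mem_filter]
      constructor
      · rintro ⟨hdV, hd1⟩
        refine ⟨β d, ?_, hβmem d hdV, hd1⟩
        simp only [hJ, Finset.mem_image]
        refine ⟨d, ?_, rfl⟩
        simp only [Finset.mem_union, hRdef, Set.Finite.mem_toFinset, Set.mem_setOf_eq]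
        exact Or.inl ⟨hdV, hd1⟩
      · rintro ⟨m, hm, hdm, hd1⟩
        exact ⟨⟨m, hdm⟩, hd1⟩
    rw [hbi, Finset.card_biUnion (fun x hx y hy hxy => hdisjfil x hx y hy hxy _ _ _ _)]
  have hsumΛ : ∑ n ∈ J, cardΛ n = Λfin.card := by
    have hbi : Λfin = J.biUnion
        (fun n => (T n).filter (fun d => d = 0 ∨ (d ≠ 0 ∧ (d-1) ∉ V))) := by
      ext d
      simp only [hΛdef, Set.Finite.mem_toFinset, Set.mem_setOf_eq, Finset.mem_biUnion,
        Finset.mem_filter]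
      constructor
      · rintro ⟨hdV, hcond⟩
        refine ⟨β d, ?_, hβmem d hdV, hcond⟩
        simp only [hJ, Finset.mem_image]
        refine ⟨d, ?_, rfl⟩
        simp only [Finset.mem_union, hΛdef, Set.Finite.mem_toFinset, Set.mem_setOf_eq]
        exact Or.inr ⟨hdV, hcond⟩
      · rintro ⟨m, hm, hdm, hcond⟩
        exact ⟨⟨m, hdm⟩, hcond⟩
    rw [hbi, Finset.card_biUnion (fun x hx y hy hxy => hdisjfil x hx y hy hxy _ _ _ _)]
  have htel : Λfin.card = Rfin.card + 1 := by
    obtain ⟨N, hN⟩ := Set.Finite.bddAbove hVcfin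
    have hNV : ∀ e, N + 1 ≤ e → e ∈ V := by
      intro e he
      by_contra hc
      have := hN (show e ∈ Vᶜ from hc)
      omega
    set M := N + 1 with hM
    have hMV : M ∈ V := hNV M le_rfl
    have hRcard : Rfin = (Finset.range M).filter (fun d => d ∈ V ∧ (d+1) ∉ V) := by
      ext d
      simp only [hRdef, Set.Finite.mem_toFinset, Set.mem_setOf_eq, Finset.mem_filter,
        Finset.mem_range]
      constructor
      · rintro ⟨hdV, hd1⟩
        refine ⟨?_, hdV, hd1⟩
        have := hN (show (d+1) ∈ Vᶜ from hd1)
        omega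
      · tauto
    have hΛU : Λfin.card = ((Finset.range M).filter (fun d => d ∉ V ∧ (d+1) ∈ V)).card
        + (if (0:ℕ) ∈ V then 1 else 0) := by
      have himg : Λfin = ((Finset.range M).filter (fun d => d ∉ V ∧ (d+1) ∈ V)).image
          (fun d => d + 1) ∪ (if h : (0:ℕ) ∈ V then {0} else ∅) := by
        ext e
        simp only [hΛdef, Set.Finite.mem_toFinset, Set.mem_setOf_eq, Finset.mem_union,
          Finset.mem_image, Finset.mem_filter, Finset.mem_range]
        constructor
        · rintro ⟨heV, h0 | ⟨hne, hnm⟩⟩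
          · right
            subst h0
            rw [dif_pos heV]
            simp
          · left
            refine ⟨e - 1, ⟨?_, hnm, by rwa [show e - 1 + 1 = e by omega]⟩, by omega⟩
            have := hN (show (e-1) ∈ Vᶜ from hnm)
            omega
        · rintro (⟨d, ⟨hdr, hdnv, hdv⟩, hde⟩ | he)
          · subst hde
            exact ⟨hdv, Or.inr ⟨by omega, by simpa using hdnv⟩⟩
          · by_cases h0 : (0:ℕ) ∈ V
            · rw [dif_pos h0] at he
              simp only [Finset.mem_singleton] at he
              subst he
              exact ⟨h0, Or.inl rfl⟩
            · rw [dif_neg h0] at he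
              simp at he
      rw [himg, Finset.card_union_of_disjoint, Finset.card_image_of_injective _
        (fun x y h => by omega)]
      · congr 1
        by_cases h0 : (0:ℕ) ∈ V
        · rw [dif_pos h0, if_pos h0]; simp
        · rw [dif_neg h0, if_neg h0]; simp
      · rw [Finset.disjoint_right]
        intro e he
        by_cases h0 : (0:ℕ) ∈ V
        · rw [dif_pos h0] at he
          simp only [Finset.mem_singleton] at he
          subst he
          simp
        · rw [dif_neg h0] at he
          simp at he
    have htc := tele_count V M
    rw [if_pos hMV] at htc
    rw [hRcard, hΛU]
    omega
  -- (7) final contradiction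
  have heven_total : Even (∑ n ∈ J, (cardR n + cardΛ n)) :=
    Finset.even_sum _ (fun n _ => hbdry n)
  rw [Finset.sum_add_distrib, hsumR, hsumΛ, htel] at heven_total
  rw [Nat.even_iff] at heven_total
  omega

section Growth

variable {x : ℕ → ℕ}

lemma coeff_eq (hg : SufficientGrowth x) :
    ∀ N (c d : ℕ → ℕ), (∀ i, c i ≤ 3) → (∀ i, d i ≤ 3) →
    (∑ i ∈ Finset.range N, c i * x i = ∑ i ∈ Finset.range N, d i * x i) →
    ∀ i < N, c i = d i := by
  intro N
  induction N with
  | zero => intro c d _ _ _ i hi; omega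
  | succ N ih =>
    intro c d hc hd hsum i hi
    rw [Finset.sum_range_succ, Finset.sum_range_succ] at hsum
    have hbound : ∀ (e : ℕ → ℕ), (∀ i, e i ≤ 3) →
        ∑ i ∈ Finset.range N, e i * x i ≤ 3 * ∑ i ∈ Finset.range N, x i := by
      intro e he
      rw [Finset.mul_sum]
      exact Finset.sum_le_sum (fun i _ => Nat.mul_le_mul_right _ (he i))
    have hgN := hg N
    have htop : c N = d N := by
      rcases Nat.lt_trichotomy (c N) (d N) with h | h | h
      · exfalso
        have h1 : ∑ i ∈ Finset.range N, c i * x i + c N * x N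
            < x N + c N * x N := by
          have := hbound c hc
          omega
        have h2 : x N + c N * x N ≤ d N * x N := by
          have : (c N + 1) * x N ≤ d N * x N := Nat.mul_le_mul_right _ (by omega)
          calc x N + c N * x N = (c N + 1) * x N := by ring
            _ ≤ d N * x N := this
        omega
      · exact h
      · exfalso
        have h1 : ∑ i ∈ Finset.range N, d i * x i + d N * x N
            < x N + d N * x N := by
          have := hbound d hd
          omega
        have h2 : x N + d N * x N ≤ c N * x N := by
          have : (d N + 1) * x N ≤ c N * x N := Nat.mul_le_mul_right _ (by omega)
          calc x N + d N * x N = (d N + 1) * x N := by ring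
            _ ≤ c N * x N := this
        omega
    have hEq : c N * x N = d N * x N := by rw [htop]
    rcases Nat.lt_or_ge i N with hiN | hiN
    · exact ih c d hc hd (by omega) i hiN
    · have : i = N := by omega
      rw [this]
      exact htop

lemma indicator_sum (x : ℕ → ℕ) (s : Finset ℕ) (N : ℕ) (hs : ∀ i ∈ s, i < N) :
    ∑ i ∈ Finset.range N, (if i ∈ s then 1 else 0) * x i = ∑ i ∈ s, x i := by
  classical
  have h1 : ∀ i ∈ Finset.range N, (if i ∈ s then 1 else 0) * x i
      = (if i ∈ s then x i else 0) := by
    intro i _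
    split <;> simp
  rw [Finset.sum_congr rfl h1, Finset.sum_ite_mem]
  congr 1
  ext i
  simp only [Finset.mem_inter, Finset.mem_range]
  exact ⟨fun h => h.2, fun h => ⟨hs i h, h⟩⟩

lemma rep_add (hg : SufficientGrowth x) {s t u : Finset ℕ}
    (h : ∑ i ∈ s, x i + ∑ i ∈ t, x i = ∑ i ∈ u, x i) :
    Disjoint s t ∧ s ∪ t = u := by
  classical
  set N : ℕ := (s ∪ t ∪ u).sup id + 1 with hN
  have hmem : ∀ i ∈ s ∪ t ∪ u, i < N := by
    intro i hi
    have := Finset.le_sup (f := id) hi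
    simp only [id] at this
    omega
  have hsN : ∀ i ∈ s, i < N := fun i hi => hmem i (by simp [hi])
  have htN : ∀ i ∈ t, i < N := fun i hi => hmem i (by simp [hi])
  have huN : ∀ i ∈ u, i < N := fun i hi => hmem i (by simp [hi])
  set c : ℕ → ℕ := fun i => (if i ∈ s then 1 else 0) + (if i ∈ t then 1 else 0) with hc
  set d : ℕ → ℕ := fun i => (if i ∈ u then 1 else 0) with hd
  have hsum : ∑ i ∈ Finset.range N, c i * x i = ∑ i ∈ Finset.range N, d i * x i := by
    have h1 : ∀ i ∈ Finset.range N, c i * x i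
        = (if i ∈ s then 1 else 0) * x i + (if i ∈ t then 1 else 0) * x i := by
      intro i _
      rw [hc]
      ring
    rw [Finset.sum_congr rfl h1, Finset.sum_add_distrib,
      indicator_sum x s N hsN, indicator_sum x t N htN]
    rw [hd]
    rw [indicator_sum x u N huN]
    exact h
  have heq := coeff_eq hg N c d
    (fun i => by by_cases h1 : i ∈ s <;> by_cases h2 : i ∈ t <;> simp [hc, h1, h2])
    (fun i => by by_cases h1 : i ∈ u <;> simp [hd, h1]) hsum
  constructor
  · rw [Finset.disjoint_left]
    intro i his hit
    have hiN : i < N := hsN i his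
    have := heq i hiN
    simp only [hc, hd] at this
    rw [if_pos his, if_pos hit] at this
    split at this <;> omega
  · ext i
    by_cases hiN : i < N
    · have := heq i hiN
      simp only [hc, hd] at this
      simp only [Finset.mem_union]
      constructor
      · rintro (his | hit)
        · rw [if_pos his] at this
          by_contra hiu
          rw [if_neg hiu] at this
          omega
        · rw [if_pos hit] at this
          by_contra hiu
          rw [if_neg hiu] at this
          omega
      · intro hiu
        rw [if_pos hiu] at this
        by_contra hst
        simp only [Finset.mem_union, not_or] at hst
        rw [if_neg hst.1, if_neg hst.2] at this
        omega
    · constructor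
      · intro hi
        exfalso
        exact hiN (hmem i (by simp only [Finset.mem_union] at hi ⊢; tauto))
      · intro hi
        exfalso
        exact hiN (hmem i (by simp only [Finset.mem_union]; tauto))

end Growth

section SumSupp

variable {a : ℕ → ℕ} (ha0 : a 0 = 1) (hadvd : ∀ n, a n ∣ a (n + 1))
  (hamono : ∀ n, a n < a (n + 1))

include ha0 hadvd hamono

lemma asupp_zero' : asupp a 0 = ∅ := by
  ext i
  simp [asupp, alphaDigit]

lemma asupp_sum {x : ℕ → ℕ} (hdx : DisjointAlphaSupport a x) (t : Finset ℕ) :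
    asupp a (∑ i ∈ t, x i) = ⋃ i ∈ t, asupp a (x i) := by
  classical
  induction t using Finset.induction_on with
  | empty => simp [asupp_zero' ha0 hadvd hamono]
  | @insert m t hm ih =>
    rw [Finset.sum_insert hm]
    have hdisj : Disjoint (asupp a (x m)) (asupp a (∑ i ∈ t, x i)) := by
      rw [ih]
      rw [Set.disjoint_iUnion₂_right]
      intro i hi
      exact hdx m i (fun h => hm (h ▸ hi))
    rw [asupp_add ha0 hadvd hamono hdisj, ih, Finset.set_biUnion_insert]

end SumSupp


/-- A strongly summable ultrafilter with disjoint `α`-support is `α`-special. -/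
theorem stronglySummable_alpha_special (a : ℕ → ℕ)
    (ha0 : a 0 = 1) (hadvd : ∀ n, a n ∣ a (n + 1)) (hamono : ∀ n, a n < a (n + 1))
    (p : Ultrafilter ℕ) (hp : StronglySummable p)
    (hdisj : ∃ x : ℕ → ℕ, (∀ n, 0 < x n) ∧ SufficientGrowth x ∧
      DisjointAlphaSupport a x ∧ FS x ∈ p) :
    ∃ x : ℕ → ℕ, (∀ n, 0 < x n) ∧ SufficientGrowth x ∧
      DisjointAlphaSupport a x ∧ FS x ∈ p ∧
      ∀ L : Set ℕ, L.Infinite →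
        ∃ y : ℕ → ℕ, FS y ⊆ FS x ∧ FS y ∈ p ∧
          (L \ ⋃ n, asupp a (y n)).Infinite := by

  classical
  obtain ⟨x, hxpos, hxg, hxd, hxFS⟩ := hdisj
  refine ⟨x, hxpos, hxg, hxd, hxFS, ?_⟩
  intro L hL
  have hLset : {d : ℕ | d ∈ L}.Infinite := by
    rwa [Set.setOf_mem_eq]
  set cnt : ℕ → ℕ := Nat.count (· ∈ L) with hcnt
  set nthL : ℕ → ℕ := Nat.nth (· ∈ L) with hnthL
  have hcnt_inj : ∀ d1 ∈ L, ∀ d2 ∈ L, cnt d1 = cnt d2 → d1 = d2 := by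
    intro d1 h1 d2 h2 he
    have e1 : Nat.nth (· ∈ L) (cnt d1) = d1 := Nat.nth_count h1
    rw [he, Nat.nth_count h2] at e1
    exact e1.symm
  have hafin : ∀ z : ℕ, (asupp a z).Finite := asupp_finite ha0 hadvd hamono
  set tr : ℕ → Finset ℕ :=
    fun z => (((hafin z).toFinset.filter (fun d => d ∈ L)).image cnt) with htr
  have htr_mem : ∀ z k, k ∈ tr z ↔ ∃ d, d ∈ asupp a z ∧ d ∈ L ∧ cnt d = k := by
    intro z k
    simp only [htr, Finset.mem_image, Finset.mem_filter, Set.Finite.mem_toFinset]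
    constructor
    · rintro ⟨d, ⟨hd1, hd2⟩, hd3⟩
      exact ⟨d, hd1, hd2, hd3⟩
    · rintro ⟨d, hd1, hd2, hd3⟩
      exact ⟨d, ⟨hd1, hd2⟩, hd3⟩
  have htr_union : ∀ u v : ℕ, Disjoint (asupp a u) (asupp a v) →
      tr (u+v) = tr u ∪ tr v := by
    intro u v huv
    ext k
    rw [Finset.mem_union, htr_mem, htr_mem, htr_mem]
    rw [asupp_add ha0 hadvd hamono huv]
    constructor
    · rintro ⟨d, hd1 | hd1, hd2, hd3⟩
      · exact Or.inl ⟨d, hd1, hd2, hd3⟩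
      · exact Or.inr ⟨d, hd1, hd2, hd3⟩
    · rintro (⟨d, hd1, hd2, hd3⟩ | ⟨d, hd1, hd2, hd3⟩)
      · exact ⟨d, Or.inl hd1, hd2, hd3⟩
      · exact ⟨d, Or.inr hd1, hd2, hd3⟩
  have htr_disj : ∀ u v : ℕ, Disjoint (asupp a u) (asupp a v) →
      Disjoint (tr u) (tr v) := by
    intro u v huv
    rw [Finset.disjoint_left]
    intro k hku hkv
    obtain ⟨d1, hd1, hL1, hc1⟩ := (htr_mem u k).mp hku
    obtain ⟨d2, hd2, hL2, hc2⟩ := (htr_mem v k).mp hkv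
    have : d1 = d2 := hcnt_inj d1 hL1 d2 hL2 (by rw [hc1, hc2])
    exact Set.disjoint_left.mp huv hd1 (this ▸ hd2)
  set E : Set ℕ := {z | Even (comps (tr z))} with hE
  -- every witness inside FS x has pairwise disjoint α-supports of its terms
  have hblocks : ∀ w : ℕ → ℕ, FS w ⊆ FS x →
      ∀ i j, i ≠ j → Disjoint (asupp a (w i)) (asupp a (w j)) := by
    intro w hsub i j hij
    obtain ⟨si, _, hsi⟩ := hsub (show w i ∈ FS w from
      ⟨{i}, Finset.singleton_nonempty i, Finset.sum_singleton _ _⟩)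
    obtain ⟨sj, _, hsj⟩ := hsub (show w j ∈ FS w from
      ⟨{j}, Finset.singleton_nonempty j, Finset.sum_singleton _ _⟩)
    obtain ⟨su, _, hsu⟩ := hsub (show w i + w j ∈ FS w from
      ⟨{i, j}, Finset.insert_nonempty _ _, by rw [Finset.sum_pair hij]⟩)
    have hd := rep_add hxg (show (∑ n ∈ si, x n) + ∑ n ∈ sj, x n = ∑ n ∈ su, x n by
      rw [hsi, hsj, hsu])
    have ha1 : asupp a (w i) = ⋃ n ∈ si, asupp a (x n) := by
      rw [← hsi]; exact asupp_sum ha0 hadvd hamono hxd si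
    have ha2 : asupp a (w j) = ⋃ n ∈ sj, asupp a (x n) := by
      rw [← hsj]; exact asupp_sum ha0 hadvd hamono hxd sj
    rw [ha1, ha2]
    rw [Set.disjoint_left]
    intro e he1 he2
    simp only [Set.mem_iUnion] at he1 he2
    obtain ⟨n1, hn1, he1⟩ := he1
    obtain ⟨n2, hn2, he2⟩ := he2
    have hne : n1 ≠ n2 := fun h => (Finset.disjoint_left.mp hd.1 hn1) (h ▸ hn2)
    exact Set.disjoint_left.mp (hxd n1 n2 hne) he1 he2
  -- E ∈ p
  have hEp : E ∈ p := by
    by_contra hEc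
    have hEc' : Eᶜ ∈ p := (Ultrafilter.compl_mem_iff_notMem).mpr hEc
    have hA : Eᶜ ∩ FS x ∈ p := by
      exact Filter.inter_mem hEc' hxFS
    obtain ⟨w, hwpos, hwsub, hwmem⟩ := hp _ hA
    have hwFSx : FS w ⊆ FS x := fun z hz => (hwsub hz).2
    have hdisW := hblocks w hwFSx
    have hWtr : ∀ i j, i ≠ j → Disjoint (tr (w i)) (tr (w j)) :=
      fun i j hij => htr_disj _ _ (hdisW i j hij)
    have hself : ∀ i, w i ∈ FS w := fun i =>
      ⟨{i}, Finset.singleton_nonempty i, Finset.sum_singleton _ _⟩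
    have hpair : ∀ i j, i ≠ j → w i + w j ∈ FS w := fun i j hij =>
      ⟨{i, j}, Finset.insert_nonempty _ _, by rw [Finset.sum_pair hij]⟩
    have hodd : ∀ i, Odd (comps (tr (w i))) := by
      intro i
      have hmem : w i ∈ Eᶜ := (hwsub (hself i)).1
      rw [← Nat.not_even_iff_odd]
      exact hmem
    have hoddU : ∀ i j, i ≠ j → Odd (comps (tr (w i) ∪ tr (w j))) := by
      intro i j hij
      have hmem : w i + w j ∈ Eᶜ := (hwsub (hpair i j hij)).1
      have heq : tr (w i + w j) = tr (w i) ∪ tr (w j) := htr_union _ _ (hdisW i j hij)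
      rw [← heq, ← Nat.not_even_iff_odd]
      exact hmem
    have hglueodd : ∀ j, j ≠ 0 → Odd (glue (tr (w 0)) (tr (w j))) := by
      intro j hj
      have h1 := comps_union (hWtr 0 j (Ne.symm hj))
      have h2 := hodd 0
      have h3 := hodd j
      have h4 := hoddU 0 j (Ne.symm hj)
      rw [Nat.odd_iff] at h2 h3 h4 ⊢
      omega
    set W : Finset ℕ := (tr (w 0)).image (fun d => d + 1)
      ∪ (tr (w 0)).image (fun d => d - 1) with hW
    have hmap : ∀ j, j ≠ 0 → ∃ e, e ∈ tr (w j) ∧ e ∈ W := by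
      intro j hj
      have hg := hglueodd j hj
      have hne : glue (tr (w 0)) (tr (w j)) ≠ 0 := by
        intro hc
        rw [hc] at hg
        simp [Nat.odd_iff] at hg
      unfold glue gR at hne
      rcases Nat.eq_zero_or_pos ((tr (w 0)).filter (fun d => d + 1 ∈ tr (w j))).card
        with h0 | h0
      · have h1 : 0 < ((tr (w j)).filter (fun d => d + 1 ∈ tr (w 0))).card := by omega
        obtain ⟨d, hd⟩ := Finset.card_pos.mp h1
        simp only [Finset.mem_filter] at hd
        refine ⟨d, hd.1, ?_⟩
        simp only [hW, Finset.mem_union, Finset.mem_image]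
        exact Or.inr ⟨d + 1, hd.2, by omega⟩
      · obtain ⟨d, hd⟩ := Finset.card_pos.mp h0
        simp only [Finset.mem_filter] at hd
        refine ⟨d + 1, hd.2, ?_⟩
        simp only [hW, Finset.mem_union, Finset.mem_image]
        exact Or.inl ⟨d, hd.1, rfl⟩
    set f : ℕ → ℕ := fun j => if h : ∃ e, e ∈ tr (w j) ∧ e ∈ W then h.choose else 0
      with hf
    have hfspec : ∀ j, j ≠ 0 → f j ∈ tr (w j) ∧ f j ∈ W := by
      intro j hj
      have h := hmap j hj
      simp only [hf, dif_pos h]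
      exact h.choose_spec
    have hinf : ({j : ℕ | j ≠ 0}).Infinite := by
      have : {j : ℕ | j ≠ 0} = ({0} : Set ℕ)ᶜ := by
        ext j; simp
      rw [this]
      exact Set.Finite.infinite_compl (Set.finite_singleton 0)
    have hmapsTo : Set.MapsTo f {j : ℕ | j ≠ 0} ↑W := by
      intro j hj
      exact (hfspec j hj).2
    obtain ⟨j1, hj1, j2, hj2, hne, hfe⟩ :=
      hinf.exists_ne_map_eq_of_mapsTo hmapsTo W.finite_toSet
    have h1 := (hfspec j1 hj1).1
    have h2 := (hfspec j2 hj2).1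
    rw [hfe] at h1
    exact (Finset.disjoint_left.mp (hWtr j1 j2 hne) (hfe ▸ (hfspec j1 hj1).1)) h2
  -- main witness
  have hAE : E ∩ FS x ∈ p := by
    exact Filter.inter_mem hEp hxFS
  obtain ⟨y, hypos, hysub, hymem⟩ := hp _ hAE
  have hyFSx : FS y ⊆ FS x := fun z hz => (hysub hz).2
  refine ⟨y, hyFSx, hymem, ?_⟩
  by_contra hfin
  rw [Set.not_infinite] at hfin
  have hdisY := hblocks y hyFSx
  have hYtr : ∀ i j, i ≠ j → Disjoint (tr (y i)) (tr (y j)) :=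
    fun i j hij => htr_disj _ _ (hdisY i j hij)
  have hself : ∀ i, y i ∈ FS y := fun i =>
    ⟨{i}, Finset.singleton_nonempty i, Finset.sum_singleton _ _⟩
  have hpair : ∀ i j, i ≠ j → y i + y j ∈ FS y := fun i j hij =>
    ⟨{i, j}, Finset.insert_nonempty _ _, by rw [Finset.sum_pair hij]⟩
  have hevenY : ∀ n, Even (comps (tr (y n))) := fun n => (hysub (hself n)).1
  have hglueY : ∀ i j, i ≠ j → Even (glue (tr (y i)) (tr (y j))) := by
    intro i j hij
    have h1 := comps_union (hYtr i j hij)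
    have h2 := hevenY i
    have h3 := hevenY j
    have h4 : Even (comps (tr (y i) ∪ tr (y j))) := by
      have heq : tr (y i + y j) = tr (y i) ∪ tr (y j) := htr_union _ _ (hdisY i j hij)
      rw [← heq]
      exact (hysub (hpair i j hij)).1
    rw [Nat.even_iff] at h2 h3 h4 ⊢
    omega
  apply parity_contra (fun n => tr (y n)) hYtr hevenY hglueY
  have hsub2 : {k : ℕ | ∀ n, k ∉ tr (y n)} ⊆ nthL ⁻¹' (L \ ⋃ n, asupp a (y n)) := by
    intro k hk
    simp only [Set.mem_preimage, Set.mem_diff, Set.mem_iUnion]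
    have hmemL : nthL k ∈ L := Nat.nth_mem_of_infinite hLset k
    refine ⟨hmemL, ?_⟩
    rintro ⟨n, hn⟩
    have hcn : cnt (nthL k) = k := Nat.count_nth_of_infinite hLset k
    have : k ∈ tr (y n) := (htr_mem _ _).mpr ⟨nthL k, hn, hmemL, hcn⟩
    exact hk n this
  exact Set.Finite.subset
    (Set.Finite.preimage (Function.Injective.injOn (Nat.nth_injective hLset)) hfin) hsub2
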